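/- For positive integers ℓ, m, the congruence subgroups of the braid group satisfy B_n[ℓ] · B_n[m] = B_n[gcd(ℓ, m)]. -/

import Mathlib

open Matrix FreeGroup

lemma one_add_pow_of_sq {R : Type*} [Ring R] (x : R) (h : x * x = 0) (k : ℕ) :
    (1 + x) ^ k = 1 + (k : ℕ) • x := by
  induction k with
  | zero => simp
  | succ k ih =>
    have h2 : ((k : ℕ) • x) * x = 0 := by
      rw [smul_mul_assoc, h, smul_zero]
    rw [pow_succ, ih, add_mul, one_mul, mul_add, mul_one, h2, add_zero, succ_nsmul]
    abel

lemma cp_eval (K A B : ℕ) (hA : A ≤ K) (hB : B ≤ K) (hK : 1 ≤ K) :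
    min (K*B) (K*(K*B - min (K*B) (K*A))) = if A < B then K*B else 0 := by
  rcases lt_or_ge A B with h | h
  · have h1 : K*A ≤ K*B := Nat.mul_le_mul_left K h.le
    have h2 : K*A + K ≤ K*B := by
      calc K*A + K = K*(A+1) := by ring
        _ ≤ K*B := Nat.mul_le_mul_left K h
    have h3 : B ≤ K*B - min (K*B) (K*A) := by omega
    have h4 : K*B ≤ K*(K*B - min (K*B) (K*A)) := Nat.mul_le_mul_left K h3
    rw [if_pos h]
    omega
  · have h1 : K*B ≤ K*A := Nat.mul_le_mul_left K h
    have h2 : min (K*B) (K*A) = K*B := by omega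
    rw [if_neg (by omega), h2, Nat.sub_self, Nat.mul_zero]
    omega

lemma c'p_eval (K A B : ℕ) (hA : A ≤ K) (hB : B ≤ K) (hK : 1 ≤ K) :
    K*A - min (K*A) (K * (if A < B then K*B else 0)) = if A < B then 0 else K*A := by
  rcases lt_or_ge A B with h | h
  · rw [if_pos h, if_pos h]
    have hB1 : 1 ≤ B := by omega
    have h1 : K*A ≤ K*(K*B) := by
      calc K*A ≤ K*K := Nat.mul_le_mul_left K hA
        _ = K*(K*1) := by ring
        _ ≤ K*(K*B) := Nat.mul_le_mul_left K (Nat.mul_le_mul_left K hB1)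
    omega
  · rw [if_neg (by omega), if_neg (by omega), Nat.mul_zero]
    omega


/-- The braid relations on `n` strands, with Artin generators indexed by `Fin (n-1)`. -/
def braidRels (n : ℕ) : Set (FreeGroup (Fin (n - 1))) :=
  {r | (∃ i j : Fin (n - 1), (i : ℕ) + 1 = (j : ℕ) ∧
          r = of i * of j * of i * (of j * of i * of j)⁻¹) ∨
       (∃ i j : Fin (n - 1), (i : ℕ) + 2 ≤ (j : ℕ) ∧
          r = of i * of j * (of j * of i)⁻¹)}

/-- The braid group on `n` strands, as a presented group. -/
def BraidGroup (n : ℕ) : Type := PresentedGroup (braidRels n)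

instance (n : ℕ) : Group (BraidGroup n) := by unfold BraidGroup; infer_instance

/-- The Artin generator `σ_{i+1}` of the braid group on `n` strands. -/
def σ {n : ℕ} (i : Fin (n - 1)) : BraidGroup n := PresentedGroup.of i

/-- The integral Burau matrix of the Artin generator `σ_{i+1}` (rows and columns `i`, `i+1`
in 0-indexed notation): the identity matrix with the block `[[2, -1], [1, 0]]` inserted. -/
def burauMat (n : ℕ) (i : ℕ) : Matrix (Fin n) (Fin n) ℤ :=
  Matrix.of fun j k =>
    if (j : ℕ) = i ∧ (k : ℕ) = i then 2
    else if (j : ℕ) = i ∧ (k : ℕ) = i + 1 then -1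
    else if (j : ℕ) = i + 1 ∧ (k : ℕ) = i then 1
    else if (j : ℕ) = i + 1 ∧ (k : ℕ) = i + 1 then 0
    else if j = k then 1 else 0

/-- `IsBurau ρ` asserts that `ρ` is the integral Burau representation (Burau at `t = -1`). -/
def IsBurau {n : ℕ} (ρ : BraidGroup n →* Matrix.GeneralLinearGroup (Fin n) ℤ) : Prop :=
  ∀ i : Fin (n - 1), (ρ (σ i) : Matrix (Fin n) (Fin n) ℤ) = burauMat n (i : ℕ)

/-- Reduction modulo `ℓ` on `GL(n, ℤ)`. -/
def glMod (n ℓ : ℕ) :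
    Matrix.GeneralLinearGroup (Fin n) ℤ →* Matrix.GeneralLinearGroup (Fin n) (ZMod ℓ) :=
  Units.map ((Int.castRingHom (ZMod ℓ)).mapMatrix.toMonoidHom)

/-- The level-`ℓ` congruence subgroup `B_n[ℓ]` of the braid group: the kernel of the
integral Burau representation reduced mod `ℓ`. -/
def braidCong {n : ℕ} (ρ : BraidGroup n →* Matrix.GeneralLinearGroup (Fin n) ℤ) (ℓ : ℕ) :
    Subgroup (BraidGroup n) :=
  ((glMod n ℓ).comp ρ).ker

instance braidCong_normal {n : ℕ} (ρ : BraidGroup n →* Matrix.GeneralLinearGroup (Fin n) ℤ)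
    (ℓ : ℕ) : (braidCong ρ ℓ).Normal :=
  MonoidHom.normal_ker _

-- row/column vectors for the nilpotent part
private def bvA (n : ℕ) (i : ℕ) : Fin n → ℤ := fun j =>
  if (j : ℕ) = i ∨ (j : ℕ) = i + 1 then 1 else 0

private def bvB (n : ℕ) (i : ℕ) : Fin n → ℤ := fun k =>
  if (k : ℕ) = i then 1 else if (k : ℕ) = i + 1 then -1 else 0

private def bN (n : ℕ) (i : ℕ) : Matrix (Fin n) (Fin n) ℤ :=
  Matrix.of fun j k => bvA n i j * bvB n i k

lemma burauMat_eq (n : ℕ) (i : Fin (n - 1)) :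
    burauMat n (i : ℕ) = 1 + bN n (i : ℕ) := by
  ext j k
  simp only [burauMat, bN, bvA, bvB, Matrix.of_apply, Matrix.add_apply, Matrix.one_apply]
  have hjk : (j = k) ↔ ((j : ℕ) = (k : ℕ)) := Fin.ext_iff
  by_cases h1 : (j : ℕ) = (i : ℕ) <;> by_cases h2 : (k : ℕ) = (i : ℕ) <;>
    by_cases h3 : (j : ℕ) = (i : ℕ) + 1 <;> by_cases h4 : (k : ℕ) = (i : ℕ) + 1 <;>
    simp [h1, h2, h3, h4, hjk] <;> omega

lemma bN_sq (n : ℕ) (i : Fin (n - 1)) : bN n (i : ℕ) * bN n (i : ℕ) = 0 := by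
  have hi1 : (i : ℕ) + 1 < n := by have := i.isLt; omega
  have hi0 : (i : ℕ) < n := by omega
  ext j k
  rw [Matrix.mul_apply]
  have hsum : ∀ l : Fin n, bN n (i : ℕ) j l * bN n (i : ℕ) l k
      = (bvA n i j * bvB n i k) * (bvB n i l * bvA n i l) := by
    intro l; simp only [bN, Matrix.of_apply]; ring
  rw [Finset.sum_congr rfl (fun l _ => hsum l), ← Finset.mul_sum]
  have : ∀ l : Fin n, bvB n i l * bvA n i l =
      (if l = (⟨(i : ℕ), hi0⟩ : Fin n) then (1 : ℤ) else 0)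
      + (if l = (⟨(i : ℕ) + 1, hi1⟩ : Fin n) then (-1 : ℤ) else 0) := by
    intro l
    simp only [bvA, bvB, Fin.ext_iff]
    by_cases h1 : (l : ℕ) = (i : ℕ) <;> by_cases h2 : (l : ℕ) = (i : ℕ) + 1 <;>
      simp [h1, h2] <;> omega
  rw [Finset.sum_congr rfl (fun l _ => this l), Finset.sum_add_distrib]
  simp [Matrix.zero_apply]

lemma sigma_pow_mem {n : ℕ} (ρ : BraidGroup n →* Matrix.GeneralLinearGroup (Fin n) ℤ)
    (hρ : IsBurau ρ) (k : ℕ) (i : Fin (n - 1)) : σ i ^ k ∈ braidCong ρ k := by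
  show ((glMod n k).comp ρ) (σ i ^ k) = 1
  rw [MonoidHom.comp_apply, map_pow, map_pow]
  apply Units.ext
  rw [Units.val_pow_eq_pow_val, Units.val_one]
  have hval : ((glMod n k) (ρ (σ i)) : Matrix (Fin n) (Fin n) (ZMod k))
      = (burauMat n (i : ℕ)).map (Int.cast : ℤ → ZMod k) := by
    simp [glMod, RingHom.mapMatrix_apply, hρ i]
  rw [hval, burauMat_eq n i]
  have hmap : ((1 + bN n (i : ℕ)).map (Int.cast : ℤ → ZMod k))
      = 1 + (bN n (i : ℕ)).map (Int.cast : ℤ → ZMod k) := by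
    ext j l
    simp [Matrix.map_apply, Matrix.add_apply, Matrix.one_apply, apply_ite (Int.cast : ℤ → ZMod k)]
  rw [hmap]
  have hsq : (bN n (i : ℕ)).map (Int.cast : ℤ → ZMod k)
      * (bN n (i : ℕ)).map (Int.cast : ℤ → ZMod k) = 0 := by
    have hc : (Int.cast : ℤ → ZMod k) = ⇑(Int.castRingHom (ZMod k)) := rfl
    rw [hc, ← Matrix.map_mul, bN_sq n i]
    ext j l; simp
  rw [one_add_pow_of_sq _ hsq k]
  have : (k : ℕ) • (bN n (i : ℕ)).map (Int.cast : ℤ → ZMod k) = 0 := by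
    ext j l
    simp [Matrix.smul_apply, nsmul_eq_mul, ZMod.natCast_self]
  rw [this, add_zero]

lemma mem_braidCong_iff {n : ℕ} (ρ : BraidGroup n →* Matrix.GeneralLinearGroup (Fin n) ℤ)
    (k : ℕ) (x : BraidGroup n) :
    x ∈ braidCong ρ k ↔ ∀ j l : Fin n,
      (k : ℤ) ∣ ((ρ x : Matrix (Fin n) (Fin n) ℤ) j l
        - (1 : Matrix (Fin n) (Fin n) ℤ) j l) := by
  have hmem : x ∈ braidCong ρ k ↔
      ((ρ x : Matrix (Fin n) (Fin n) ℤ)).map (Int.cast : ℤ → ZMod k) = 1 := by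
    rw [braidCong, MonoidHom.mem_ker, MonoidHom.comp_apply, Units.ext_iff]
    constructor
    · intro h
      simpa [glMod, RingHom.mapMatrix_apply] using h
    · intro h
      simpa [glMod, RingHom.mapMatrix_apply] using h
  rw [hmem]
  have hone : (1 : Matrix (Fin n) (Fin n) (ZMod k))
      = (1 : Matrix (Fin n) (Fin n) ℤ).map (Int.cast : ℤ → ZMod k) := by
    ext j l
    simp [Matrix.map_apply, Matrix.one_apply, apply_ite (Int.cast : ℤ → ZMod k)]
  rw [hone, ← Matrix.ext_iff]
  simp only [Matrix.map_apply]
  constructor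
  · intro h j l
    rw [← ZMod.intCast_zmod_eq_zero_iff_dvd]
    push_cast
    rw [h j l]
    ring
  · intro h j l
    have := h j l
    rw [← ZMod.intCast_zmod_eq_zero_iff_dvd] at this
    push_cast at this
    linear_combination this

lemma braidCong_mono {n : ℕ} (ρ : BraidGroup n →* Matrix.GeneralLinearGroup (Fin n) ℤ)
    {a b : ℕ} (h : a ∣ b) : braidCong ρ b ≤ braidCong ρ a := by
  intro x hx
  rw [mem_braidCong_iff] at hx ⊢
  intro j l
  exact dvd_trans (Int.natCast_dvd_natCast.2 h) (hx j l)

lemma braidCong_lcm_mem {n : ℕ} (ρ : BraidGroup n →* Matrix.GeneralLinearGroup (Fin n) ℤ)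
    {a b k : ℕ} (hk : k ∣ Nat.lcm a b) {x : BraidGroup n}
    (ha : x ∈ braidCong ρ a) (hb : x ∈ braidCong ρ b) : x ∈ braidCong ρ k := by
  rw [mem_braidCong_iff] at ha hb ⊢
  intro j l
  have hl : ((Nat.lcm a b : ℕ) : ℤ) ∣ ((ρ x : Matrix (Fin n) (Fin n) ℤ) j l
      - (1 : Matrix (Fin n) (Fin n) ℤ) j l) := by
    have := Int.ofNat_dvd_left.mpr (Int.lcm_dvd (Int.dvd_natAbs.mpr (ha j l)) (Int.dvd_natAbs.mpr (hb j l)))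
    have hcast : Int.lcm (a : ℤ) (b : ℤ) = Nat.lcm a b := by
      simp [Int.lcm]
    rwa [hcast] at this
  exact dvd_trans (Int.natCast_dvd_natCast.2 hk) hl

lemma braidCong_sup_coprime {n : ℕ} (ρ : BraidGroup n →* Matrix.GeneralLinearGroup (Fin n) ℤ)
    (hρ : IsBurau ρ) {a b : ℕ} (h : Nat.gcd a b = 1) :
    braidCong ρ a ⊔ braidCong ρ b = ⊤ := by
  have hgen : Subgroup.closure (Set.range (σ : Fin (n - 1) → BraidGroup n)) = ⊤ :=
    PresentedGroup.closure_range_of (braidRels n)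
  rw [eq_top_iff, ← hgen, Subgroup.closure_le]
  rintro _ ⟨i, rfl⟩
  rw [SetLike.mem_coe]
  have key : ∀ k : ℕ, ∀ t : ℤ, σ i ^ ((k : ℤ) * t) ∈ braidCong ρ k := by
    intro k t
    rw [_root_.zpow_mul, zpow_natCast]
    exact Subgroup.zpow_mem _ (sigma_pow_mem ρ hρ k i) t
  have bez : (1 : ℤ) = a * Nat.gcdA a b + b * Nat.gcdB a b := by
    have := Nat.gcd_eq_gcd_ab a b
    rw [h] at this
    exact_mod_cast this
  have : σ i = σ i ^ ((a : ℤ) * Nat.gcdA a b) * σ i ^ ((b : ℤ) * Nat.gcdB a b) := by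
    rw [← _root_.zpow_add, ← bez, zpow_one]
  rw [this]
  exact mul_mem (Subgroup.mem_sup_left (key a _)) (Subgroup.mem_sup_right (key b _))

lemma nt_exists (ℓ m : ℕ) (hℓ : 0 < ℓ) (hm : 0 < m) :
    ∃ c c' e : ℕ, e ∣ Nat.gcd ℓ m ∧ e ∣ c ∧ m ∣ Nat.lcm c (Nat.gcd ℓ m) ∧
      ℓ ∣ Nat.lcm c' e ∧ Nat.gcd c c' = 1 := by
  set K := ℓ + m + 1 with hK
  have hK1 : 1 ≤ K := by omega
  have hl0 : ℓ ≠ 0 := hℓ.ne'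
  have hm0 : m ≠ 0 := hm.ne'
  have hlK : ℓ ^ K ≠ 0 := pow_ne_zero _ hl0
  have hmK : m ^ K ≠ 0 := pow_ne_zero _ hm0
  set g1 := Nat.gcd (m ^ K) (ℓ ^ K) with hg1def
  have hg1ne : g1 ≠ 0 := Nat.gcd_ne_zero_left hmK
  set c0 := m ^ K / g1 with hc0def
  have hc0ne : c0 ≠ 0 :=
    (Nat.div_pos (Nat.le_of_dvd (Nat.pos_of_ne_zero hmK) (Nat.gcd_dvd_left _ _))
      (Nat.pos_of_ne_zero hg1ne)).ne'
  set c := Nat.gcd (m ^ K) (c0 ^ K) with hcdef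
  have hcne : c ≠ 0 := Nat.gcd_ne_zero_left hmK
  set g2 := Nat.gcd (ℓ ^ K) (c ^ K) with hg2def
  have hg2ne : g2 ≠ 0 := Nat.gcd_ne_zero_left hlK
  set c' := ℓ ^ K / g2 with hc'def
  have hc'ne : c' ≠ 0 :=
    (Nat.div_pos (Nat.le_of_dvd (Nat.pos_of_ne_zero hlK) (Nat.gcd_dvd_left _ _))
      (Nat.pos_of_ne_zero hg2ne)).ne'
  set e := Nat.gcd ℓ c with hedef
  have hene : e ≠ 0 := Nat.gcd_ne_zero_left hl0
  set d := Nat.gcd ℓ m with hddef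
  have hdne : d ≠ 0 := Nat.gcd_ne_zero_left hl0
  have hAle : ∀ p : ℕ, ℓ.factorization p ≤ K := fun p => by
    have := Nat.factorization_lt p hl0; omega
  have hBle : ∀ p : ℕ, m.factorization p ≤ K := fun p => by
    have := Nat.factorization_lt p hm0; omega
  have hlKf : ∀ p, (ℓ ^ K).factorization p = K * ℓ.factorization p := fun p => by
    rw [Nat.factorization_pow, Finsupp.smul_apply, smul_eq_mul]
  have hmKf : ∀ p, (m ^ K).factorization p = K * m.factorization p := fun p => by
    rw [Nat.factorization_pow, Finsupp.smul_apply, smul_eq_mul]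
  have hc0f : ∀ p, c0.factorization p =
      K * m.factorization p - min (K * m.factorization p) (K * ℓ.factorization p) := by
    intro p
    rw [hc0def, Nat.factorization_div (Nat.gcd_dvd_left (m ^ K) (ℓ ^ K)), Finsupp.tsub_apply,
      hmKf p, Nat.factorization_gcd hmK hlK, Finsupp.inf_apply, hmKf p, hlKf p]
  have hcf : ∀ p, c.factorization p =
      if ℓ.factorization p < m.factorization p then K * m.factorization p else 0 := by
    intro p
    rw [hcdef, Nat.factorization_gcd hmK (pow_ne_zero _ hc0ne), Finsupp.inf_apply, hmKf p,
      Nat.factorization_pow, Finsupp.smul_apply, smul_eq_mul, hc0f p]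
    exact cp_eval K _ _ (hAle p) (hBle p) hK1
  have hc'f : ∀ p, c'.factorization p =
      if ℓ.factorization p < m.factorization p then 0 else K * ℓ.factorization p := by
    intro p
    rw [hc'def, Nat.factorization_div (Nat.gcd_dvd_left (ℓ ^ K) (c ^ K)), Finsupp.tsub_apply,
      hlKf p, Nat.factorization_gcd hlK (pow_ne_zero _ hcne), Finsupp.inf_apply,
      hlKf p, Nat.factorization_pow, Finsupp.smul_apply, smul_eq_mul, hcf p]
    exact c'p_eval K _ _ (hAle p) (hBle p) hK1
  have hef : ∀ p, e.factorization p = min (ℓ.factorization p) (c.factorization p) := by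
    intro p
    rw [hedef, Nat.factorization_gcd hl0 hcne, Finsupp.inf_apply]
  have hdf : ∀ p, d.factorization p = min (ℓ.factorization p) (m.factorization p) := by
    intro p
    rw [hddef, Nat.factorization_gcd hl0 hm0, Finsupp.inf_apply]
  refine ⟨c, c', e, ?_, ?_, ?_, ?_, ?_⟩
  · rw [← Nat.factorization_le_iff_dvd hene hdne, Finsupp.le_def]
    intro p
    rw [hef p, hdf p, hcf p]
    have h1 : m.factorization p ≤ K * m.factorization p :=
      Nat.le_mul_of_pos_left _ (by omega)
    split_ifs with h <;> omega
  · rw [← Nat.factorization_le_iff_dvd hene hcne, Finsupp.le_def]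
    intro p
    rw [hef p]
    exact min_le_right _ _
  · rw [← Nat.factorization_le_iff_dvd hm0 (Nat.lcm_ne_zero hcne hdne),
      Nat.factorization_lcm hcne hdne, Finsupp.le_def]
    intro p
    rw [Finsupp.sup_apply, hcf p, hdf p]
    have h1 : m.factorization p ≤ K * m.factorization p :=
      Nat.le_mul_of_pos_left _ (by omega)
    split_ifs with h <;> omega
  · rw [← Nat.factorization_le_iff_dvd hl0 (Nat.lcm_ne_zero hc'ne hene),
      Nat.factorization_lcm hc'ne hene, Finsupp.le_def]
    intro p
    rw [Finsupp.sup_apply, hc'f p, hef p, hcf p]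
    have h1 : ℓ.factorization p ≤ K * ℓ.factorization p :=
      Nat.le_mul_of_pos_left _ (by omega)
    have h2 : ℓ.factorization p ≤ K := hAle p
    have h3 : K ≤ K * m.factorization p ∨ m.factorization p = 0 := by
      rcases Nat.eq_zero_or_pos (m.factorization p) with h | h
      · right; exact h
      · left; exact Nat.le_mul_of_pos_right _ h
    split_ifs with h <;> omega
  · have : Nat.gcd c c' ∣ 1 := by
      rw [← Nat.factorization_le_iff_dvd (Nat.gcd_ne_zero_left hcne) one_ne_zero,
        Nat.factorization_one, Nat.factorization_gcd hcne hc'ne, Finsupp.le_def]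
      intro p
      rw [Finsupp.inf_apply, hcf p, hc'f p]
      simp only [Finsupp.coe_zero, Pi.zero_apply]
      split_ifs with h <;> omega
    exact Nat.dvd_one.1 this

open Pointwise in
theorem braidCong_mul {n : ℕ} (ρ : BraidGroup n →* Matrix.GeneralLinearGroup (Fin n) ℤ)
    (hρ : IsBurau ρ) (ℓ m : ℕ) (hℓ : 0 < ℓ) (hm : 0 < m) :
    (braidCong ρ ℓ : Set (BraidGroup n)) * (braidCong ρ m : Set (BraidGroup n)) =
      (braidCong ρ (Nat.gcd ℓ m) : Set (BraidGroup n)) := by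
  obtain ⟨c, c', e, h_ed, h_ec, h_m, h_l, h_cc'⟩ := nt_exists ℓ m hℓ hm
  apply Set.Subset.antisymm
  · rw [← Subgroup.mul_normal]
    intro x hx
    rw [SetLike.mem_coe] at hx ⊢
    exact sup_le (braidCong_mono ρ (Nat.gcd_dvd_left ℓ m))
      (braidCong_mono ρ (Nat.gcd_dvd_right ℓ m)) hx
  · intro x hx
    rw [SetLike.mem_coe] at hx
    have hxe : x ∈ braidCong ρ e := braidCong_mono ρ h_ed hx
    have hxcc' : x ∈ (braidCong ρ c : Set (BraidGroup n)) * (braidCong ρ c' : Set (BraidGroup n)) := by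
      rw [← Subgroup.mul_normal, braidCong_sup_coprime ρ hρ h_cc']
      simp
    obtain ⟨y, hy, z, hz, hyz⟩ := hxcc'
    simp only at hyz
    rw [SetLike.mem_coe] at hy hz
    have hye : y ∈ braidCong ρ e := braidCong_mono ρ h_ec hy
    have hze : z ∈ braidCong ρ e := by
      have hxy : y * z ∈ braidCong ρ e := by rw [hyz]; exact hxe
      exact (Subgroup.mul_mem_cancel_left _ hye).1 hxy
    have hzl : z ∈ braidCong ρ ℓ := braidCong_lcm_mem ρ h_l hz hze
    have hzd : z ∈ braidCong ρ (Nat.gcd ℓ m) :=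
      braidCong_mono ρ (Nat.gcd_dvd_left ℓ m) hzl
    have hyd : y ∈ braidCong ρ (Nat.gcd ℓ m) := by
      have hxy : y * z ∈ braidCong ρ (Nat.gcd ℓ m) := by rw [hyz]; exact hx
      exact (Subgroup.mul_mem_cancel_right _ hzd).1 hxy
    have hym : y ∈ braidCong ρ m := braidCong_lcm_mem ρ h_m hy hyd
    have hconj : y * z * y⁻¹ ∈ braidCong ρ ℓ := (braidCong_normal ρ ℓ).conj_mem z hzl y
    refine ⟨y * z * y⁻¹, SetLike.mem_coe.2 hconj, y, SetLike.mem_coe.2 hym, ?_⟩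
    rw [← hyz]
    group
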